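/- Let 0 < α < 1/2. Then there exists a universal constant d'_α > 0 such that, for every discrete-time Markov transition kernel g with a stationary distribution π on a σ-compact metric state space, one has d'_α · t_H(α) ≤ t_L. -/

import Mathlib

open MeasureTheory ENNReal

noncomputable section

namespace MixHit

variable {X : Type*} [MeasurableSpace X]

/-- Total variation distance between two Borel measures. -/
def tv (μ ν : Measure X) : ℝ≥0∞ :=
  ⨆ (A : Set X) (_ : MeasurableSet A), (μ A - ν A) ⊔ (ν A - μ A)

/-- `g` is a Markov transition kernel: each `g x` is a (Borel) probability measure,
measurably in `x`. -/
def IsMarkov (g : X → Measure X) : Prop :=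
  (∀ x, IsProbabilityMeasure (g x)) ∧
    ∀ A : Set X, MeasurableSet A → Measurable fun x => g x A

/-- `t`-step transition probabilities (`iterK g 0 x = δ_x`). -/
def iterK (g : X → Measure X) : ℕ → X → Measure X
  | 0 => fun x => Measure.dirac x
  | n + 1 => fun x => (g x).bind (iterK g n)

/-- `π` is a stationary distribution for `g`. -/
def Stationary (g : X → Measure X) (π : Measure X) : Prop :=
  ∀ A : Set X, MeasurableSet A → ∫⁻ x, g x A ∂π = π A

/-- `g` is reversible with respect to `π`. -/
def Reversible (g : X → Measure X) (π : Measure X) : Prop :=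
  ∀ A B : Set X, MeasurableSet A → MeasurableSet B →
    ∫⁻ x in A, g x B ∂π = ∫⁻ x in B, g x A ∂π

/-- The lazy kernel `g_L(x,·) = (1/2) g(x,·) + (1/2) δ_x`. -/
def lazy (g : X → Measure X) : X → Measure X := fun x =>
  (2 : ℝ≥0∞)⁻¹ • g x + (2 : ℝ≥0∞)⁻¹ • Measure.dirac x

/-- Mixing time `min {t : sup_x ‖g^t(x,·) − π‖ ≤ ε}`, as an element of `ℝ≥0∞`
(`⊤` if there is no such `t`). -/
def mixTime (g : X → Measure X) (π : Measure X) (ε : ℝ≥0∞) : ℝ≥0∞ :=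
  ⨅ (t : ℕ) (_ : ∀ x, tv (iterK g t x) π ≤ ε), (t : ℝ≥0∞)

/-- `d̄(t) = sup_{x,y} ‖g^t(x,·) − g^t(y,·)‖`. -/
def dbar (g : X → Measure X) (t : ℕ) : ℝ≥0∞ :=
  ⨆ (x : X) (y : X), tv (iterK g t x) (iterK g t y)

/-- Standardized mixing time `min {t : d̄(t) ≤ ε}` (`⊤` if there is no such `t`). -/
def stdMix (g : X → Measure X) (ε : ℝ≥0∞) : ℝ≥0∞ :=
  ⨅ (t : ℕ) (_ : dbar g t ≤ ε), (t : ℝ≥0∞)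

/-- `P_x(τ_A = t)` for the chain with kernel `g` started at `x`, where
`τ_A = min {t : X_t ∈ A}` (first-step recursion). -/
def hitEq (g : X → Measure X) (A : Set X) : ℕ → X → ℝ≥0∞
  | 0 => fun x => A.indicator (fun _ => 1) x
  | n + 1 => fun x => Aᶜ.indicator (fun x' => ∫⁻ y, hitEq g A n y ∂(g x')) x

/-- `P_x(τ_A ≤ t)`. -/
def hitLE (g : X → Measure X) (A : Set X) (t : ℕ) (x : X) : ℝ≥0∞ :=
  ∑ s ∈ Finset.range (t + 1), hitEq g A s x

/-- `E_x[τ_A] = ∑_{t ≥ 0} P_x(τ_A > t)`. -/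
def expHit (g : X → Measure X) (A : Set X) (x : X) : ℝ≥0∞ :=
  ∑' t : ℕ, (1 - hitLE g A t x)

/-- Maximum hitting time `t_H(α) = sup {E_x[τ_A] : x ∈ X, A Borel, π(A) ≥ α}`. -/
def maxHit (g : X → Measure X) (π : Measure X) (α : ℝ) : ℝ≥0∞ :=
  ⨆ (x : X) (A : Set X) (_ : MeasurableSet A) (_ : ENNReal.ofReal α ≤ π A),
    expHit g A x

/-- Large hitting time
`τ_g(α) = min {t : inf {P_x(τ_A ≤ t) : x ∈ X, A Borel, π(A) ≥ α} > 0.9}`. -/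
def largeHit (g : X → Measure X) (π : Measure X) (α : ℝ) : ℝ≥0∞ :=
  ⨅ (t : ℕ) (_ : (9 / 10 : ℝ≥0∞) <
      ⨅ (x : X) (A : Set X) (_ : MeasurableSet A) (_ : ENNReal.ofReal α ≤ π A),
        hitLE g A t x),
    (t : ℝ≥0∞)

/-- The strong Feller property: continuity of `x ↦ g(x,·)` in total variation. -/
def StrongFeller [PseudoMetricSpace X] (g : X → Measure X) : Prop :=
  ∀ x : X, ∀ ε : ℝ, 0 < ε → ∃ δ : ℝ, 0 < δ ∧
    ∀ y : X, dist y x < δ → tv (g x) (g y) < ENNReal.ofReal ε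

/-- Law of `X_t` on the event that `t` is the first time the chain lies in `S`. -/
def enterDist (g : X → Measure X) (S : Set X) : ℕ → X → Measure X
  | 0 => fun x => (Measure.dirac x).restrict S
  | n + 1 => fun x => Sᶜ.indicator (fun x' => (g x').bind (enterDist g S n)) x

/-- Law of the chain's position at its first entrance (at a time `≥ 0`) into `S`. -/
def hitMeasure (g : X → Measure X) (S : Set X) (x : X) : Measure X :=
  Measure.sum fun t => enterDist g S t x

/-- One step of the trace of `g` on `S`: take one `g`-step, then run until the
first entrance into `S`. -/
def traceK (g : X → Measure X) (S : Set X) : X → Measure X :=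
  fun x => (g x).bind (hitMeasure g S)

/-- The trace of `g` on `S`, viewed as a kernel on the subtype `S`. -/
def traceSub (g : X → Measure X) (S : Set X) : S → Measure S :=
  fun x => (traceK g S (x : X)).comap (Subtype.val)

/-- Normalization of `π` to `S`, as a measure on the subtype `S`. -/
def normSub (π : Measure X) (S : Set X) : Measure S :=
  (π S)⁻¹ • π.comap (Subtype.val : S → X)

/-- Ergodicity: from every starting point, the chain converges to `π`
in total variation. -/
def ErgodicK (g : X → Measure X) (π : Measure X) : Prop :=
  Stationary g π ∧
    ∀ x : X, Filter.Tendsto (fun t => tv (iterK g t x) π) Filter.atTop (nhds 0)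


theorem pair_le_tv {μ ν : Measure X} {A : Set X} (hA : MeasurableSet A) :
    (μ A - ν A) ⊔ (ν A - μ A) ≤ tv μ ν :=
  le_iSup₂ (f := fun A (_ : MeasurableSet A) => (μ A - ν A) ⊔ (ν A - μ A)) A hA

theorem sub_le_tv {μ ν : Measure X} {A : Set X} (hA : MeasurableSet A) :
    μ A - ν A ≤ tv μ ν :=
  le_trans le_sup_left (pair_le_tv hA)

theorem sub_le_tv' {μ ν : Measure X} {A : Set X} (hA : MeasurableSet A) :
    ν A - μ A ≤ tv μ ν :=
  le_trans le_sup_right (pair_le_tv hA)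

theorem tv_le {μ ν : Measure X} {c : ℝ≥0∞}
    (h : ∀ A : Set X, MeasurableSet A → μ A ≤ ν A + c ∧ ν A ≤ μ A + c) :
    tv μ ν ≤ c := by
  refine iSup₂_le fun A hA => sup_le ?_ ?_
  · exact tsub_le_iff_right.2 ((h A hA).1.trans (by rw [add_comm]))
  · exact tsub_le_iff_right.2 ((h A hA).2.trans (by rw [add_comm]))

theorem tv_comm (μ ν : Measure X) : tv μ ν = tv ν μ := by
  unfold tv
  congr 1; ext A; congr 1; ext hA; exact sup_comm _ _

theorem tv_le_one {μ ν : Measure X} [IsProbabilityMeasure μ] [IsProbabilityMeasure ν] :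
    tv μ ν ≤ 1 :=
  tv_le fun A _ => ⟨le_trans prob_le_one le_add_self, le_trans prob_le_one le_add_self⟩

theorem tv_triangle (μ ν ρ : Measure X) : tv μ ρ ≤ tv μ ν + tv ν ρ := by
  refine iSup₂_le fun A hA => sup_le ?_ ?_
  · exact le_trans (tsub_le_tsub_add_tsub (b := ν A))
      (add_le_add (sub_le_tv hA) (sub_le_tv hA))
  · refine le_trans (tsub_le_tsub_add_tsub (b := ν A)) ?_
    rw [add_comm (tv μ ν)]
    exact add_le_add (sub_le_tv' (μ := ν) hA) (sub_le_tv' (ν := ν) hA)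




theorem IsMarkov.measurable {g : X → Measure X} (hg : IsMarkov g) : Measurable g :=
  Measure.measurable_measure.mpr fun A hA => hg.2 A hA

theorem meas_klint {g : X → Measure X} (hg : Measurable g) {f : X → ℝ≥0∞}
    (hf : Measurable f) : Measurable fun x => ∫⁻ y, f y ∂g x :=
  (Measure.measurable_lintegral hf).comp hg

theorem iterK_measurable {g : X → Measure X} (hg : IsMarkov g) (n : ℕ) :
    Measurable (iterK g n) := by
  induction n with
  | zero => exact Measure.measurable_dirac
  | succ n ih => exact (Measure.measurable_bind' ih).comp hg.measurable

theorem iterK_apply {g : X → Measure X} (hg : IsMarkov g) (n : ℕ) (x : X) {A : Set X}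
    (hA : MeasurableSet A) : iterK g (n + 1) x A = ∫⁻ y, iterK g n y A ∂g x :=
  Measure.bind_apply hA (iterK_measurable hg n).aemeasurable

theorem iterK_prob {g : X → Measure X} (hg : IsMarkov g) (n : ℕ) (x : X) :
    IsProbabilityMeasure (iterK g n x) := by
  induction n generalizing x with
  | zero => exact Measure.dirac.isProbabilityMeasure
  | succ n ih =>
    constructor
    rw [iterK_apply hg n x MeasurableSet.univ]
    have : ∀ y : X, iterK g n y Set.univ = 1 := fun y => (ih y).measure_univ
    simp only [this]
    simpa using (hg.1 x).measure_univ

theorem iterK_add {g : X → Measure X} (hg : IsMarkov g) (m n : ℕ) (x : X) :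
    iterK g (m + n) x = (iterK g m x).bind (iterK g n) := by
  induction m generalizing x with
  | zero =>
    rw [Nat.zero_add]
    exact (Measure.dirac_bind (iterK_measurable hg n) x).symm
  | succ m ih =>
    have h1 : m + 1 + n = (m + n) + 1 := by omega
    rw [h1]
    show (g x).bind (iterK g (m + n)) = _
    have h2 : (iterK g (m + n)) = fun y => (iterK g m y).bind (iterK g n) := funext fun y => ih y
    rw [h2]
    rw [← Measure.bind_bind (iterK_measurable hg m).aemeasurable (iterK_measurable hg n).aemeasurable]
    rfl

theorem stationary_bind {g : X → Measure X} {π : Measure X} (hg : IsMarkov g)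
    (hs : Stationary g π) : π.bind g = π :=
  Measure.ext fun A hA => by rw [Measure.bind_apply hA hg.measurable.aemeasurable, hs A hA]

theorem stationary_iterK {g : X → Measure X} {π : Measure X} (hg : IsMarkov g)
    (hs : Stationary g π) (n : ℕ) : π.bind (iterK g n) = π := by
  induction n with
  | zero => exact Measure.bind_dirac
  | succ n ih =>
    show π.bind (fun x => (g x).bind (iterK g n)) = π
    rw [← Measure.bind_bind hg.measurable.aemeasurable (iterK_measurable hg n).aemeasurable,
      stationary_bind hg hs, ih]

theorem prob_le_one' {μ : Measure X} [IsProbabilityMeasure μ] (A : Set X) : μ A ≤ 1 :=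
  prob_le_one

theorem bind_apply_le {μ ν : Measure X} [IsProbabilityMeasure μ] [IsProbabilityMeasure ν]
    {Q : X → Measure X} (hQ : IsMarkov Q) {A : Set X} (hA : MeasurableSet A)
    {D : ℝ≥0∞} (hD : ∀ x y : X, tv (Q x) (Q y) ≤ D) :
    (μ.bind Q) A ≤ (ν.bind Q) A + D * tv μ ν := by
  obtain ⟨s, hs, h1, h2⟩ := hahn_decomposition (μ := μ) (ν := ν)
  set f : X → ℝ≥0∞ := fun x => Q x A with hfdef
  have hfm : Measurable f := hQ.2 A hA
  have hf1 : ∀ x, f x ≤ 1 := by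
    intro x; have := hQ.1 x; exact prob_le_one' A
  have hres1 : ν.restrict s ≤ μ.restrict s := by
    refine Measure.le_iff.2 fun t ht => ?_
    rw [Measure.restrict_apply ht, Measure.restrict_apply ht]
    exact h1 _ (ht.inter hs) Set.inter_subset_right
  have hres2 : μ.restrict sᶜ ≤ ν.restrict sᶜ := by
    refine Measure.le_iff.2 fun t ht => ?_
    rw [Measure.restrict_apply ht, Measure.restrict_apply ht]
    exact h2 _ (ht.inter hs.compl) Set.inter_subset_right
  set ρ : Measure X := μ.restrict s - ν.restrict s with hρdef
  set ρ' : Measure X := ν.restrict sᶜ - μ.restrict sᶜ with hρ'def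
  have hd1 : ν.restrict s + ρ = μ.restrict s := by
    rw [add_comm]; exact Measure.sub_add_cancel_of_le hres1
  have hd2 : μ.restrict sᶜ + ρ' = ν.restrict sᶜ := by
    rw [add_comm]; exact Measure.sub_add_cancel_of_le hres2
  have ha : ρ Set.univ = μ s - ν s := by
    rw [Measure.sub_apply MeasurableSet.univ hres1]
    simp [Measure.restrict_apply_univ]
  have hb : ρ' Set.univ = ν sᶜ - μ sᶜ := by
    rw [Measure.sub_apply MeasurableSet.univ hres2]
    simp [Measure.restrict_apply_univ]
  have hνs : ν s ≤ μ s := h1 s hs subset_rfl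
  have hμsc : μ sᶜ ≤ ν sᶜ := h2 sᶜ hs.compl subset_rfl
  have hab : ρ Set.univ = ρ' Set.univ := by
    rw [ha, hb]
    have e1 : μ s + μ sᶜ = 1 := by
      rw [measure_add_measure_compl hs]; exact measure_univ
    have e2 : ν s + ν sᶜ = 1 := by
      rw [measure_add_measure_compl hs]; exact measure_univ
    have fin : ∀ (m : Measure X) (t : Set X), m = μ ∨ m = ν → m t ≠ ⊤ := by
      rintro m t (rfl | rfl) <;> exact measure_ne_top _ _
    have h3 : μ s - ν s + ν s + μ sᶜ = ν sᶜ - μ sᶜ + μ sᶜ + ν s := by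
      rw [tsub_add_cancel_of_le hνs, tsub_add_cancel_of_le hμsc, e1, add_comm (ν sᶜ) (ν s), e2]
    have h4 : μ s - ν s + (ν s + μ sᶜ) = ν sᶜ - μ sᶜ + (ν s + μ sᶜ) := by
      calc μ s - ν s + (ν s + μ sᶜ) = μ s - ν s + ν s + μ sᶜ := by ring
        _ = ν sᶜ - μ sᶜ + μ sᶜ + ν s := h3
        _ = ν sᶜ - μ sᶜ + (ν s + μ sᶜ) := by ring
    exact (ENNReal.add_left_inj (ENNReal.add_ne_top.2
      ⟨measure_ne_top _ _, measure_ne_top _ _⟩)).1 h4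
  have hbtv : ρ' Set.univ ≤ tv μ ν := hb ▸ sub_le_tv' hs.compl
  have key : ∫⁻ x, f x ∂ρ ≤ ∫⁻ x, f x ∂ρ' + D * ρ' Set.univ := by
    set b := ρ' Set.univ with hbdef
    have hble : b ≤ 1 := by
      rw [hb]; exact le_trans (tsub_le_self) (prob_le_one' _)
    have hbfin : b ≠ ⊤ := ne_top_of_le_ne_top one_ne_top hble
    rcases eq_or_ne b 0 with h0 | h0
    · have hρ0 : ρ Set.univ = 0 := hab.trans h0
      have : ∫⁻ x, f x ∂ρ ≤ ρ Set.univ := by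
        calc ∫⁻ x, f x ∂ρ ≤ ∫⁻ _, 1 ∂ρ := lintegral_mono hf1
          _ = ρ Set.univ := by simp
      exact le_trans (this.trans_eq hρ0) zero_le
    · rw [← ENNReal.mul_le_mul_iff_left h0 hbfin]
      have pointwise : ∀ x y : X, f x ≤ f y + D := by
        intro x y
        calc f x ≤ f y + (f x - f y) := le_add_tsub
          _ ≤ f y + D := add_le_add_right (le_trans (sub_le_tv hA) (hD x y)) _
      calc (∫⁻ x, f x ∂ρ) * b = ∫⁻ x, f x * b ∂ρ := (lintegral_mul_const b hfm).symm
        _ = ∫⁻ x, ∫⁻ _, f x ∂ρ' ∂ρ := by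
            refine lintegral_congr fun x => ?_
            rw [lintegral_const]
        _ ≤ ∫⁻ _, ∫⁻ y, f y + D ∂ρ' ∂ρ :=
            lintegral_mono fun x => lintegral_mono fun y => pointwise x y
        _ = ∫⁻ _, (∫⁻ y, f y ∂ρ' + D * b) ∂ρ := by
            refine lintegral_congr fun x => ?_
            rw [lintegral_add_right _ measurable_const, lintegral_const]
        _ = (∫⁻ y, f y ∂ρ' + D * b) * ρ Set.univ := lintegral_const _
        _ = (∫⁻ y, f y ∂ρ' + D * b) * b := by rw [hab]
  have hbindμ : (μ.bind Q) A = ∫⁻ x, f x ∂μ := Measure.bind_apply hA hQ.measurable.aemeasurable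
  have hbindν : (ν.bind Q) A = ∫⁻ x, f x ∂ν := Measure.bind_apply hA hQ.measurable.aemeasurable
  rw [hbindμ, hbindν]
  have hsplitμ : ∫⁻ x, f x ∂μ
      = ∫⁻ x, f x ∂(μ.restrict s) + ∫⁻ x, f x ∂(μ.restrict sᶜ) := by
    conv_lhs => rw [← Measure.restrict_add_restrict_compl (μ := μ) hs]
    rw [lintegral_add_measure]
  have hsplitν : ∫⁻ x, f x ∂ν
      = ∫⁻ x, f x ∂(ν.restrict s) + ∫⁻ x, f x ∂(ν.restrict sᶜ) := by
    conv_lhs => rw [← Measure.restrict_add_restrict_compl (μ := ν) hs]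
    rw [lintegral_add_measure]
  have hm1 : ∫⁻ x, f x ∂(μ.restrict s)
      = ∫⁻ x, f x ∂(ν.restrict s) + ∫⁻ x, f x ∂ρ := by
    rw [← hd1, lintegral_add_measure]
  have hm2 : ∫⁻ x, f x ∂(ν.restrict sᶜ)
      = ∫⁻ x, f x ∂(μ.restrict sᶜ) + ∫⁻ x, f x ∂ρ' := by
    rw [← hd2, lintegral_add_measure]
  rw [hsplitμ, hsplitν, hm1, hm2]
  calc ∫⁻ x, f x ∂(ν.restrict s) + ∫⁻ x, f x ∂ρ + ∫⁻ x, f x ∂(μ.restrict sᶜ)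
      ≤ ∫⁻ x, f x ∂(ν.restrict s) + (∫⁻ x, f x ∂ρ' + D * ρ' Set.univ)
        + ∫⁻ x, f x ∂(μ.restrict sᶜ) := by gcongr
    _ ≤ ∫⁻ x, f x ∂(ν.restrict s) + (∫⁻ x, f x ∂ρ' + D * tv μ ν)
        + ∫⁻ x, f x ∂(μ.restrict sᶜ) := by gcongr
    _ = ∫⁻ x, f x ∂(ν.restrict s) + (∫⁻ x, f x ∂(μ.restrict sᶜ) + ∫⁻ x, f x ∂ρ')
        + D * tv μ ν := by ring

theorem tv_bind_le {μ ν : Measure X} [IsProbabilityMeasure μ] [IsProbabilityMeasure ν]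
    {Q : X → Measure X} (hQ : IsMarkov Q) {D : ℝ≥0∞}
    (hD : ∀ x y : X, tv (Q x) (Q y) ≤ D) :
    tv (μ.bind Q) (ν.bind Q) ≤ D * tv μ ν := by
  refine tv_le fun A hA => ⟨bind_apply_le hQ hA hD, ?_⟩
  rw [tv_comm μ ν] at *
  exact bind_apply_le hQ hA hD

theorem IsMarkov.iterK {g : X → Measure X} (hg : IsMarkov g) (t : ℕ) :
    IsMarkov (iterK g t) :=
  ⟨iterK_prob hg t, fun A hA =>
    (Measure.measurable_coe hA).comp (iterK_measurable hg t)⟩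

theorem tv_iterK_pow {g : X → Measure X} {π : Measure X} (hg : IsMarkov g)
    [IsProbabilityMeasure π] (hs : Stationary g π) {t : ℕ}
    (ht : ∀ x, tv (iterK g t x) π ≤ 1 / 4) (k : ℕ) (x : X) :
    tv (iterK g (k * t) x) π ≤ (1 / 2) ^ k := by
  induction k with
  | zero =>
    haveI : IsProbabilityMeasure (iterK g 0 x) := iterK_prob hg 0 x
    simpa using tv_le_one (μ := iterK g 0 x) (ν := π)
  | succ k ih =>
    have hD : ∀ y z : X, tv (iterK g t y) (iterK g t z) ≤ (1 / 2 : ℝ≥0∞) := by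
      intro y z
      calc tv (iterK g t y) (iterK g t z)
          ≤ tv (iterK g t y) π + tv π (iterK g t z) := tv_triangle _ _ _
        _ ≤ 1 / 4 + 1 / 4 := by
            refine add_le_add (ht y) ?_
            rw [tv_comm]; exact ht z
        _ = 1 / 2 := by
            simp only [one_div, ← two_mul]
            rw [show (4 : ℝ≥0∞) = 2 * 2 by norm_num,
              ENNReal.mul_inv (by norm_num) (by norm_num), ← mul_assoc,
              ENNReal.mul_inv_cancel two_ne_zero ENNReal.ofNat_ne_top, one_mul]
    have hrw : iterK g ((k + 1) * t) x = (iterK g (k * t) x).bind (iterK g t) := by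
      rw [Nat.succ_mul]; exact iterK_add hg (k * t) t x
    have hπ : π = π.bind (iterK g t) := (stationary_iterK hg hs t).symm
    have : IsProbabilityMeasure (iterK g (k * t) x) := iterK_prob hg _ x
    calc tv (iterK g ((k + 1) * t) x) π
        = tv ((iterK g (k * t) x).bind (iterK g t)) (π.bind (iterK g t)) := by
          rw [← hrw, ← hπ]
      _ ≤ (1 / 2) * tv (iterK g (k * t) x) π := tv_bind_le (hg.iterK t) hD
      _ ≤ (1 / 2) * (1 / 2) ^ k := by gcongr
      _ = (1 / 2) ^ (k + 1) := (pow_succ' _ _).symm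




theorem hitEq_zero (g : X → Measure X) (A : Set X) (x : X) :
    hitEq g A 0 x = A.indicator (fun _ => 1) x := rfl

theorem hitEq_succ (g : X → Measure X) (A : Set X) (n : ℕ) (x : X) :
    hitEq g A (n + 1) x = Aᶜ.indicator (fun x' => ∫⁻ y, hitEq g A n y ∂(g x')) x := rfl

theorem hitEq_measurable {g : X → Measure X} (hg : IsMarkov g) {A : Set X}
    (hA : MeasurableSet A) (n : ℕ) : Measurable (hitEq g A n) := by
  induction n with
  | zero => exact measurable_const.indicator hA
  | succ n ih => exact (meas_klint hg.measurable ih).indicator hA.compl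

theorem hitLE_measurable {g : X → Measure X} (hg : IsMarkov g) {A : Set X}
    (hA : MeasurableSet A) (t : ℕ) : Measurable (hitLE g A t) := by
  unfold hitLE
  exact Finset.measurable_sum _ fun s _ => hitEq_measurable hg hA s

theorem hitLE_of_mem {g : X → Measure X} {A : Set X} {x : X} (hx : x ∈ A) (t : ℕ) :
    hitLE g A t x = 1 := by
  induction t with
  | zero => simp [hitLE, hitEq, Set.indicator_of_mem hx]
  | succ t ih =>
    unfold hitLE at ih ⊢
    rw [Finset.sum_range_succ, ih]
    have : hitEq g A (t + 1) x = 0 := by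
      rw [hitEq_succ]
      exact Set.indicator_of_notMem (by simpa using hx) _
    rw [this, add_zero]

theorem hitLE_rec {g : X → Measure X} (hg : IsMarkov g) {A : Set X} (hA : MeasurableSet A)
    {x : X} (hx : x ∉ A) (t : ℕ) :
    hitLE g A (t + 1) x = ∫⁻ y, hitLE g A t y ∂g x := by
  unfold hitLE
  rw [Finset.sum_range_succ']
  have h0 : hitEq g A 0 x = 0 := by
    rw [hitEq_zero]; exact Set.indicator_of_notMem hx _
  have h1 : ∀ i, hitEq g A (i + 1) x = ∫⁻ y, hitEq g A i y ∂g x := by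
    intro i
    rw [hitEq_succ]
    exact Set.indicator_of_mem (by simpa using hx) _
  rw [h0, add_zero]
  calc ∑ k ∈ Finset.range (t + 1), hitEq g A (k + 1) x
      = ∑ k ∈ Finset.range (t + 1), ∫⁻ y, hitEq g A k y ∂g x :=
        Finset.sum_congr rfl fun i _ => h1 i
    _ = ∫⁻ y, ∑ k ∈ Finset.range (t + 1), hitEq g A k y ∂g x :=
        (lintegral_finset_sum _ fun i _ => hitEq_measurable hg hA i).symm

theorem hitLE_mono {g : X → Measure X} {A : Set X} (x : X) {s t : ℕ} (h : s ≤ t) :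
    hitLE g A s x ≤ hitLE g A t x :=
  Finset.sum_le_sum_of_subset (Finset.range_subset_range.2 (by omega))

theorem hitLE_le_one {g : X → Measure X} (hg : IsMarkov g) {A : Set X}
    (hA : MeasurableSet A) (t : ℕ) (x : X) : hitLE g A t x ≤ 1 := by
  induction t generalizing x with
  | zero =>
    have : hitLE g A 0 x = hitEq g A 0 x := by
      simp [hitLE]
    rw [this, hitEq_zero]
    classical
    by_cases h : x ∈ A <;>
      simp [Set.indicator_of_mem, Set.indicator_of_notMem, h]
  | succ t ih =>
    by_cases hx : x ∈ A
    · rw [hitLE_of_mem hx]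
    · rw [hitLE_rec hg hA hx]
      calc ∫⁻ y, hitLE g A t y ∂g x ≤ ∫⁻ _, 1 ∂g x := lintegral_mono ih
        _ = 1 := by have := hg.1 x; simp

theorem one_sub_lintegral {μ : Measure X} [IsProbabilityMeasure μ] {f : X → ℝ≥0∞}
    (hf : Measurable f) (hf1 : ∀ y, f y ≤ 1) :
    1 - ∫⁻ y, f y ∂μ = ∫⁻ y, (1 - f y) ∂μ := by
  have hne : ∫⁻ y, f y ∂μ ≠ ⊤ := by
    refine ne_top_of_le_ne_top one_ne_top ?_
    calc ∫⁻ y, f y ∂μ ≤ ∫⁻ _, 1 ∂μ := lintegral_mono hf1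
      _ = 1 := by simp
  rw [lintegral_sub hf hne (Filter.Eventually.of_forall hf1)]
  simp

theorem hitLE_shift {g : X → Measure X} (hg : IsMarkov g) {A : Set X}
    (hA : MeasurableSet A) (s : ℕ) :
    ∀ (m : ℕ) (x : X),
      1 - hitLE g A (m + s) x ≤ ∫⁻ y, (1 - hitLE g A m y) ∂(iterK g s x) := by
  induction s with
  | zero =>
    intro m x
    have : iterK g 0 x = Measure.dirac x := rfl
    rw [this, lintegral_dirac' x (f := fun y => 1 - hitLE g A m y) (measurable_const.sub (hitLE_measurable hg hA m)),
      Nat.add_zero]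
  | succ s ih =>
    intro m x
    by_cases hx : x ∈ A
    · rw [hitLE_of_mem hx]
      simp
    · have hfst : hitLE g A (m + (s + 1)) x = ∫⁻ y, hitLE g A (m + s) y ∂g x := by
        have : m + (s + 1) = (m + s) + 1 := rfl
        rw [this, hitLE_rec hg hA hx]
      haveI := hg.1 x
      rw [hfst, one_sub_lintegral (hitLE_measurable hg hA (m + s))
        (hitLE_le_one hg hA (m + s))]
      calc ∫⁻ y, (1 - hitLE g A (m + s) y) ∂g x
          ≤ ∫⁻ y, (∫⁻ z, (1 - hitLE g A m z) ∂(iterK g s y)) ∂g x :=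
            lintegral_mono fun y => ih m y
        _ = ∫⁻ z, (1 - hitLE g A m z) ∂(iterK g (s + 1) x) := by
            refine (Measure.lintegral_bind (iterK_measurable hg s).aemeasurable
              (measurable_const.sub (hitLE_measurable hg hA m)).aemeasurable).symm

theorem hitLE_decay {g : X → Measure X} (hg : IsMarkov g) {A : Set X}
    (hA : MeasurableSet A) {s : ℕ} {γ : ℝ≥0∞} (hγ1 : γ ≤ 1)
    (hγ : ∀ x, γ ≤ iterK g s x A) :
    ∀ (n : ℕ) (x : X), 1 - hitLE g A (n * s) x ≤ (1 - γ) ^ n := by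
  intro n
  induction n with
  | zero => intro x; simpa using tsub_le_self
  | succ n ih =>
    intro x
    have hrw : (n + 1) * s = n * s + s := by rw [Nat.succ_mul]
    rw [hrw]
    calc 1 - hitLE g A (n * s + s) x
        ≤ ∫⁻ y, (1 - hitLE g A (n * s) y) ∂(iterK g s x) := hitLE_shift hg hA s (n * s) x
      _ ≤ ∫⁻ y, Aᶜ.indicator (fun _ => (1 - γ) ^ n) y ∂(iterK g s x) := by
          refine lintegral_mono fun y => ?_
          by_cases hy : y ∈ A
          · rw [hitLE_of_mem hy]
            simp
          · rw [Set.indicator_of_mem (by simpa using hy)]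
            exact ih y
      _ = (1 - γ) ^ n * iterK g s x Aᶜ := by
          rw [lintegral_indicator_const hA.compl]
      _ ≤ (1 - γ) ^ n * (1 - γ) := by
          refine mul_le_mul_right ?_ _
          haveI := iterK_prob hg s x
          rw [measure_compl hA (measure_ne_top _ _), (iterK_prob hg s x).measure_univ]
          exact tsub_le_tsub_left (hγ x) 1
      _ = (1 - γ) ^ (n + 1) := (pow_succ _ _).symm

theorem expHit_le_of_decay {g : X → Measure X} (hg : IsMarkov g) {A : Set X}
    (hA : MeasurableSet A) {s : ℕ} (hs : s ≠ 0) {γ : ℝ≥0∞} (hγ1 : γ ≤ 1)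
    (hγ : ∀ x, γ ≤ iterK g s x A) (x : X) :
    expHit g A x ≤ s * γ⁻¹ := by
  haveI : NeZero s := ⟨hs⟩
  have hu : ∀ j : ℕ, 1 - hitLE g A j x ≤ (1 - γ) ^ (j / s) := by
    intro j
    have h1 : (j / s) * s ≤ j := Nat.div_mul_le_self j s
    calc 1 - hitLE g A j x ≤ 1 - hitLE g A ((j / s) * s) x :=
          tsub_le_tsub_left (hitLE_mono x h1) 1
      _ ≤ (1 - γ) ^ (j / s) := hitLE_decay hg hA hγ1 hγ (j / s) x
  calc expHit g A x ≤ ∑' j : ℕ, (1 - γ) ^ (j / s) := ENNReal.tsum_le_tsum hu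
    _ = ∑' p : ℕ × Fin s, (1 - γ) ^ (((Nat.divModEquiv s).symm p) / s) := by
        exact (Equiv.tsum_eq (Nat.divModEquiv s).symm
          (fun j => ((1 : ℝ≥0∞) - γ) ^ (j / s))).symm
    _ = ∑' p : ℕ × Fin s, (1 - γ) ^ p.1 := by
        refine tsum_congr fun p => ?_
        congr 1
        show (p.1 * s + (p.2 : ℕ)) / s = p.1
        rw [mul_comm, Nat.mul_add_div (Nat.pos_of_ne_zero hs),
          Nat.div_eq_of_lt p.2.is_lt, add_zero]
    _ = ∑' q : ℕ, ∑' _ : Fin s, (1 - γ) ^ q :=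
        ENNReal.tsum_prod (f := fun q (_ : Fin s) => ((1 : ℝ≥0∞) - γ) ^ q)
    _ = ∑' q : ℕ, (s : ℝ≥0∞) * (1 - γ) ^ q := by
        refine tsum_congr fun q => ?_
        rw [tsum_fintype]
        simp [Finset.sum_const, Finset.card_univ]
    _ = (s : ℝ≥0∞) * ∑' q : ℕ, (1 - γ) ^ q := ENNReal.tsum_mul_left
    _ = (s : ℝ≥0∞) * (1 - (1 - γ))⁻¹ := by rw [ENNReal.tsum_geometric]
    _ = (s : ℝ≥0∞) * γ⁻¹ := by rw [ENNReal.sub_sub_cancel one_ne_top hγ1]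




theorem lazy_apply {g : X → Measure X} (x : X) (A : Set X) :
    lazy g x A = 2⁻¹ * g x A + 2⁻¹ * Measure.dirac x A := by
  simp [lazy]

theorem lazy_isMarkov {g : X → Measure X} (hg : IsMarkov g) : IsMarkov (lazy g) := by
  constructor
  · intro x
    haveI := hg.1 x
    constructor
    rw [lazy_apply]
    simp [ENNReal.inv_two_add_inv_two]
  · intro A hA
    have : (fun x => lazy g x A)
        = fun x => 2⁻¹ * g x A + 2⁻¹ * A.indicator (1 : X → ℝ≥0∞) x := by
      funext x
      rw [lazy_apply, Measure.dirac_apply' x hA]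
    rw [this]
    exact (measurable_const.mul (hg.2 A hA)).add
      (measurable_const.mul (measurable_one.indicator hA))

theorem lazy_stationary {g : X → Measure X} {π : Measure X} (hg : IsMarkov g)
    (hs : Stationary g π) : Stationary (lazy g) π := by
  intro A hA
  have : (fun x => lazy g x A)
      = fun x => 2⁻¹ * g x A + 2⁻¹ * A.indicator (1 : X → ℝ≥0∞) x := by
    funext x
    rw [lazy_apply, Measure.dirac_apply' x hA]
  rw [this, lintegral_add_left (f := fun x => 2⁻¹ * g x A) (measurable_const.mul (hg.2 A hA)),
    lintegral_const_mul _ (hg.2 A hA),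
    lintegral_const_mul _ (measurable_one.indicator hA), hs A hA,
    lintegral_indicator_one hA, ← add_mul,
    ENNReal.inv_two_add_inv_two, one_mul]

theorem hitLE_lazy_le {g : X → Measure X} (hg : IsMarkov g) {A : Set X}
    (hA : MeasurableSet A) : ∀ (t : ℕ) (x : X),
    hitLE (lazy g) A t x ≤ hitLE g A t x := by
  intro t
  induction t with
  | zero =>
    intro x
    have h1 : hitLE (lazy g) A 0 x = hitEq (lazy g) A 0 x := by simp [hitLE]
    have h2 : hitLE g A 0 x = hitEq g A 0 x := by simp [hitLE]
    rw [h1, h2, hitEq_zero, hitEq_zero]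
  | succ t ih =>
    intro x
    by_cases hx : x ∈ A
    · rw [hitLE_of_mem hx, hitLE_of_mem hx]
    · rw [hitLE_rec (lazy_isMarkov hg) hA hx, hitLE_rec hg hA hx]
      have hmeasL : Measurable (hitLE (lazy g) A t) :=
        hitLE_measurable (lazy_isMarkov hg) hA t
      rw [show lazy g x = (2 : ℝ≥0∞)⁻¹ • g x + (2 : ℝ≥0∞)⁻¹ • Measure.dirac x from rfl,
        lintegral_add_measure, lintegral_smul_measure, lintegral_smul_measure,
        lintegral_dirac' x hmeasL]
      calc 2⁻¹ * ∫⁻ y, hitLE (lazy g) A t y ∂g x + 2⁻¹ * hitLE (lazy g) A t x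
          ≤ 2⁻¹ * ∫⁻ y, hitLE g A t y ∂g x + 2⁻¹ * hitLE g A t x :=
            add_le_add (mul_le_mul_right (lintegral_mono fun y => ih y) _)
              (mul_le_mul_right (ih x) _)
        _ ≤ 2⁻¹ * ∫⁻ y, hitLE g A t y ∂g x + 2⁻¹ * ∫⁻ y, hitLE g A t y ∂g x := by
            gcongr
            rw [← hitLE_rec hg hA hx]
            exact hitLE_mono x (Nat.le_succ t)
        _ = ∫⁻ y, hitLE g A t y ∂g x := by
            rw [← add_mul, ENNReal.inv_two_add_inv_two, one_mul]

theorem expHit_le_lazy {g : X → Measure X} (hg : IsMarkov g) {A : Set X}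
    (hA : MeasurableSet A) (x : X) : expHit g A x ≤ expHit (lazy g) A x :=
  ENNReal.tsum_le_tsum fun t => tsub_le_tsub_left (hitLE_lazy_le hg hA t x) 1

theorem quarter_add_quarter : (1 / 4 : ℝ≥0∞) + 1 / 4 = 1 / 2 := by
  simp only [one_div, ← two_mul]
  rw [show (4 : ℝ≥0∞) = 2 * 2 by norm_num,
    ENNReal.mul_inv (by norm_num) (by norm_num), ← mul_assoc,
    ENNReal.mul_inv_cancel two_ne_zero ENNReal.ofNat_ne_top, one_mul]

/-- the maximum hitting time is bounded by a universal multiple of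
the lazy mixing time, for any chain with a stationary distribution. -/
theorem stmt3 (α : ℝ) (hα0 : 0 < α) (hα1 : α < 1 / 2) :
    ∃ d' : ℝ, 0 < d' ∧
      ∀ (X : Type) [MetricSpace X] [MeasurableSpace X] [BorelSpace X]
        [SigmaCompactSpace X] (g : X → Measure X) (π : Measure X),
        IsMarkov g → IsProbabilityMeasure π → Stationary g π →
        ENNReal.ofReal d' * maxHit g π α ≤ mixTime (lazy g) π (1 / 4) := by
  have hα0' : ENNReal.ofReal α ≠ 0 := (ENNReal.ofReal_pos.2 hα0).ne'
  set γ : ℝ≥0∞ := ENNReal.ofReal α / 2 with hγdef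
  have hγ0 : γ ≠ 0 := (ENNReal.div_pos hα0' ENNReal.ofNat_ne_top).ne'
  have hγtop : γ ≠ ⊤ :=
    ne_top_of_le_ne_top ENNReal.ofReal_ne_top ENNReal.half_le_self
  have hγ1 : γ ≤ 1 :=
    le_trans ENNReal.half_le_self (ENNReal.ofReal_le_one.2 (by linarith))
  obtain ⟨k0, hk0⟩ := ENNReal.exists_inv_two_pow_lt hγ0
  set K : ℕ := k0 + 1 with hKdef
  have hKpow : (1 / 2 : ℝ≥0∞) ^ K ≤ γ := by
    rw [one_div]
    exact le_trans (pow_le_pow_right_of_le_one'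
      (ENNReal.inv_le_one.2 one_le_two) (Nat.le_succ k0)) hk0.le
  have hK0R : (0 : ℝ) < 2 * (K : ℝ) := by positivity
  refine ⟨α / (2 * (K : ℝ)), by positivity, ?_⟩
  intro Y _ _ _ _ g π hg hπ hstat
  haveI := hπ
  set L := lazy g with hLdef
  have hL : IsMarkov L := lazy_isMarkov hg
  have hLs : Stationary L π := lazy_stationary hg hstat
  refine le_iInf fun t => le_iInf fun ht => ?_
  by_cases ht0 : t = 0
  · subst ht0
    have hmax : maxHit g π α ≤ 0 := by
      refine iSup_le fun x => iSup_le fun A => iSup_le fun hA => iSup_le fun hπA => ?_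
      have hsing : ∀ y : Y, π ({y}ᶜ) ≤ 1 / 4 := by
        intro y
        have h1 := ht y
        have h2 : iterK L 0 y = Measure.dirac y := rfl
        have h3 : Measure.dirac y ({y}ᶜ) = 0 := by
          rw [Measure.dirac_apply' y (measurableSet_singleton y).compl]
          simp
        calc π ({y}ᶜ) = π ({y}ᶜ) - Measure.dirac y ({y}ᶜ) := by rw [h3, tsub_zero]
          _ ≤ tv (iterK L 0 y) π := by
              rw [h2]; exact sub_le_tv' (measurableSet_singleton y).compl
          _ ≤ 1 / 4 := h1
      have hAne : A.Nonempty := by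
        rcases Set.eq_empty_or_nonempty A with rfl | h
        · exfalso
          have := lt_of_lt_of_le (ENNReal.ofReal_pos.2 hα0) hπA
          simp at this
        · exact h
      obtain ⟨a, ha⟩ := hAne
      have hax : a = x := by
        by_contra hne
        have h1 : π {a} ≤ 1 / 4 :=
          le_trans (measure_mono (by simpa using Ne.symm hne)) (hsing x)
        have h2 : (1 : ℝ≥0∞) ≤ 1 / 2 := by
          calc (1 : ℝ≥0∞) = π Set.univ := measure_univ.symm
            _ ≤ π {a} + π ({a}ᶜ) := measure_univ_le_add_compl _
            _ ≤ 1 / 4 + 1 / 4 := add_le_add h1 (hsing a)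
            _ = 1 / 2 := quarter_add_quarter
        rw [one_div] at h2
        exact absurd h2 (not_le.2 (ENNReal.inv_lt_one.2 one_lt_two))
      have hxA : x ∈ A := hax ▸ ha
      have : expHit g A x = 0 := by
        have hz : ∀ m : ℕ, 1 - hitLE g A m x = 0 := by
          intro m; rw [hitLE_of_mem hxA]; simp
        simp [expHit, hz]
      exact le_of_eq this
    calc ENNReal.ofReal (α / (2 * (K : ℝ))) * maxHit g π α
        ≤ ENNReal.ofReal (α / (2 * (K : ℝ))) * 0 := mul_le_mul_right hmax _
      _ = 0 := mul_zero _
      _ ≤ ((0 : ℕ) : ℝ≥0∞) := zero_le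
  · set s : ℕ := K * t with hsdef
    have hs0 : s ≠ 0 := by
      simp [hsdef, hKdef, ht0]
    have hγle : ∀ (x : Y) (A : Set Y), MeasurableSet A → ENNReal.ofReal α ≤ π A →
        γ ≤ iterK L s x A := by
      intro x A hA hπA
      have h1 : tv (iterK L s x) π ≤ (1 / 2 : ℝ≥0∞) ^ K := tv_iterK_pow hL hLs ht K x
      have h2 : π A - iterK L s x A ≤ γ := le_trans (sub_le_tv' hA) (h1.trans hKpow)
      have h3 : ENNReal.ofReal α - γ = γ := ENNReal.sub_half ENNReal.ofReal_ne_top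
      calc γ = ENNReal.ofReal α - γ := h3.symm
        _ ≤ π A - γ := tsub_le_tsub_right hπA γ
        _ ≤ iterK L s x A := tsub_le_iff_left.2 (tsub_le_iff_right.1 h2)
    have hmax : maxHit g π α ≤ (s : ℝ≥0∞) * γ⁻¹ := by
      refine iSup_le fun x => iSup_le fun A => iSup_le fun hA => iSup_le fun hπA => ?_
      calc expHit g A x ≤ expHit L A x := expHit_le_lazy hg hA x
        _ ≤ (s : ℝ≥0∞) * γ⁻¹ :=
            expHit_le_of_decay hL hA hs0 hγ1 (fun y => hγle y A hA hπA) x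
    have hKne0 : ((K : ℝ≥0∞)) ≠ 0 := by
      simp [hKdef]
    have hKnetop : ((K : ℝ≥0∞)) ≠ ⊤ := natCast_ne_top K
    have hd : ENNReal.ofReal (α / (2 * (K : ℝ))) ≤ γ * (K : ℝ≥0∞)⁻¹ := by
      rw [div_eq_mul_inv, ENNReal.ofReal_mul hα0.le, ENNReal.ofReal_inv_of_pos hK0R]
      have h2K : ENNReal.ofReal (2 * (K : ℝ)) = 2 * (K : ℝ≥0∞) := by
        rw [ENNReal.ofReal_mul (by norm_num)]
        rw [ENNReal.ofReal_ofNat, ENNReal.ofReal_natCast]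
      rw [h2K, ENNReal.mul_inv (Or.inl two_ne_zero) (Or.inl ENNReal.ofNat_ne_top),
        ← mul_assoc]
      apply le_of_eq
      rw [hγdef, ENNReal.div_eq_inv_mul, mul_comm (2 : ℝ≥0∞)⁻¹ (ENNReal.ofReal α)]
    have hcast : ((s : ℕ) : ℝ≥0∞) = (K : ℝ≥0∞) * (t : ℝ≥0∞) := by
      rw [hsdef]; push_cast; ring
    calc ENNReal.ofReal (α / (2 * (K : ℝ))) * maxHit g π α
        ≤ (γ * (K : ℝ≥0∞)⁻¹) * ((s : ℝ≥0∞) * γ⁻¹) := mul_le_mul' hd hmax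
      _ = (γ * (K : ℝ≥0∞)⁻¹) * ((K : ℝ≥0∞) * (t : ℝ≥0∞) * γ⁻¹) := by rw [hcast]
      _ = (γ * γ⁻¹) * ((K : ℝ≥0∞)⁻¹ * (K : ℝ≥0∞)) * (t : ℝ≥0∞) := by ring
      _ = (t : ℝ≥0∞) := by
          rw [ENNReal.mul_inv_cancel hγ0 hγtop, ENNReal.inv_mul_cancel hKne0 hKnetop,
            one_mul, one_mul]
end MixHit
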